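/- Let X be a real random variable whose cumulative distribution function is continuous and strictly increasing, let Y be a Gaussian random variable with mean c ∈ ℝ and variance σ² > 0, let α ∈ (0,1) and ε ∈ (0, min{α, 1 − α}), and suppose the total variation distance between the law of X and the law of Y is at most ε. Then VaR^{α−ε}(Y) ≤ VaR^α(X) ≤ VaR^{α+ε}(Y), and consequently |VaR^α(X) − VaR^α(Y)| ≤ σ · max{Φ⁻¹(α) − Φ⁻¹(α − ε), Φ⁻¹(α + ε) − Φ⁻¹(α)}, where Φ⁻¹(β) denotes VaR^β of a standard Gaussian random variable and VaR^β(Z) := inf{t ∈ ℝ : P(Z ≤ t) ≥ β}. -/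

import Mathlib

open MeasureTheory ProbabilityTheory

/-- The value-at-risk at level `β` of a Borel probability measure `μ` on `ℝ` (the law of a
real random variable): `VaR^β(μ) = inf {t : ℝ | μ(Iic t) ≥ β}`. -/
noncomputable def VaR (β : ℝ) (μ : Measure ℝ) : ℝ :=
  sInf {t : ℝ | β ≤ (μ (Set.Iic t)).toReal}

/-- The standard normal quantile function `Φ⁻¹(β)`, i.e. `VaR^β` of a standard Gaussian. -/
noncomputable def stdGaussianQuantile (β : ℝ) : ℝ :=
  VaR β (gaussianReal 0 1)

/-- Total variation distance between two measures:
`‖μ − ν‖_TV = sup {|μ(A) − ν(A)| : A measurable}`. -/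
noncomputable def tvDist {Ω : Type*} [MeasurableSpace Ω] (μ ν : Measure Ω) : ℝ :=
  ⨆ A : {A : Set Ω // MeasurableSet A}, |(μ A.1).toReal - (ν A.1).toReal|

open Filter in
/-- Characterization of `VaR` for a probability measure with continuous strictly
increasing CDF: the CDF evaluated at `VaR β μ` equals `β`, and `VaR β μ ≤ s` iff
`β ≤ F(s)`. -/
lemma VaR_spec (μ : Measure ℝ) [IsProbabilityMeasure μ]
    (hc : Continuous fun t => (μ (Set.Iic t)).toReal)
    (hm : StrictMono fun t => (μ (Set.Iic t)).toReal)
    {β : ℝ} (hβ : β ∈ Set.Ioo (0:ℝ) 1) :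
    (μ (Set.Iic (VaR β μ))).toReal = β ∧
      ∀ s : ℝ, VaR β μ ≤ s ↔ β ≤ (μ (Set.Iic s)).toReal := by
  have hFc : (fun t => (μ (Set.Iic t)).toReal) = ⇑(ProbabilityTheory.cdf μ) :=
    funext fun t => (cdf_eq_real μ t).symm
  have hbot : Tendsto (fun t => (μ (Set.Iic t)).toReal) atBot (nhds 0) := by
    rw [hFc]; exact tendsto_cdf_atBot μ
  have htop : Tendsto (fun t => (μ (Set.Iic t)).toReal) atTop (nhds 1) := by
    rw [hFc]; exact tendsto_cdf_atTop μ
  obtain ⟨a, ha⟩ := (hbot.eventually_lt_const hβ.1).exists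
  obtain ⟨b, hb⟩ := (htop.eventually_const_lt hβ.2).exists
  obtain ⟨t, ht⟩ : ∃ t, (μ (Set.Iic t)).toReal = β :=
    intermediate_value_univ a b hc ⟨ha.le, hb.le⟩
  have hset : {s : ℝ | β ≤ (μ (Set.Iic s)).toReal} = Set.Ici t := by
    ext s
    show β ≤ (μ (Set.Iic s)).toReal ↔ t ≤ s
    rw [← ht]
    exact hm.le_iff_le
  have hVaR : VaR β μ = t := by rw [VaR, hset, csInf_Ici]
  refine ⟨by rw [hVaR, ht], fun s => ?_⟩
  rw [hVaR, ← ht]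
  exact hm.le_iff_le.symm

/-- If the CDF of `μ` takes the value `β` at `t₀`, then `VaR β μ = t₀`. -/
lemma VaR_eq_of_cdf_eq (μ : Measure ℝ) [IsProbabilityMeasure μ]
    (hc : Continuous fun t => (μ (Set.Iic t)).toReal)
    (hm : StrictMono fun t => (μ (Set.Iic t)).toReal)
    {β t₀ : ℝ} (hβ : β ∈ Set.Ioo (0:ℝ) 1)
    (ht₀ : (μ (Set.Iic t₀)).toReal = β) : VaR β μ = t₀ :=
  hm.injective (by simpa [(VaR_spec μ hc hm hβ).1] using ht₀.symm)

lemma gaussian_cdf_eq (m : ℝ) {v : NNReal} (hv : v ≠ 0) (t : ℝ) :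
    ((gaussianReal m v) (Set.Iic t)).toReal = ∫ x in Set.Iic t, gaussianPDFReal m v x := by
  rw [gaussianReal_apply_eq_integral m hv,
    ENNReal.toReal_ofReal (integral_nonneg fun x => gaussianPDFReal_nonneg m v x)]

lemma gaussian_cdf_continuous (m : ℝ) {v : NNReal} (hv : v ≠ 0) :
    Continuous fun t => ((gaussianReal m v) (Set.Iic t)).toReal := by
  have hint : Integrable (gaussianPDFReal m v) := integrable_gaussianPDFReal m v
  have h : ∀ t : ℝ, ((gaussianReal m v) (Set.Iic t)).toReal
      = (∫ x in Set.Iic (0:ℝ), gaussianPDFReal m v x)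
        + ∫ x in (0:ℝ)..t, gaussianPDFReal m v x := by
    intro t
    rw [gaussian_cdf_eq m hv,
      ← intervalIntegral.integral_Iic_sub_Iic hint.integrableOn hint.integrableOn]
    ring
  simp only [h]
  exact continuous_const.add
    (intervalIntegral.continuous_primitive (fun a b => hint.intervalIntegrable) 0)

lemma gaussian_cdf_strictMono (m : ℝ) {v : NNReal} (hv : v ≠ 0) :
    StrictMono fun t => ((gaussianReal m v) (Set.Iic t)).toReal := by
  intro s t hst
  have hint : Integrable (gaussianPDFReal m v) := integrable_gaussianPDFReal m v
  have hpos : 0 < ∫ x in s..t, gaussianPDFReal m v x :=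
    intervalIntegral.intervalIntegral_pos_of_pos hint.intervalIntegrable
      (fun x => gaussianPDFReal_pos m v x hv) hst
  have hsub := intervalIntegral.integral_Iic_sub_Iic (f := gaussianPDFReal m v)
    (μ := volume) (a := s) (b := t) hint.integrableOn hint.integrableOn
  simp only [gaussian_cdf_eq m hv]
  linarith

instance instIsProbabilityMeasureGaussianRealSq (c σ : ℝ) :
    IsProbabilityMeasure (gaussianReal c ⟨σ ^ 2, sq_nonneg σ⟩) :=
  instIsProbabilityMeasureGaussianReal c _

lemma gaussianReal_eq_map (c σ : ℝ) (hσ : 0 < σ) :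
    gaussianReal c ⟨σ ^ 2, sq_nonneg σ⟩
      = Measure.map (fun x => σ * x + c) (gaussianReal 0 1) := by
  have h1 : (fun x : ℝ => σ * x + c) = (· + c) ∘ (σ * ·) := rfl
  rw [h1, ← Measure.map_map (measurable_id'.add_const c) (measurable_id'.const_mul σ),
    gaussianReal_map_const_mul, gaussianReal_map_add_const]
  have h2 : σ * 0 + c = c := by ring
  have h3 : (⟨σ ^ 2, sq_nonneg σ⟩ : NNReal) * 1 = ⟨σ ^ 2, sq_nonneg σ⟩ := mul_one _
  rw [h2]
  exact congrArg (gaussianReal c) h3.symm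

lemma VaR_gaussian (c σ : ℝ) (hσ : 0 < σ) {β : ℝ} (hβ : β ∈ Set.Ioo (0:ℝ) 1) :
    VaR β (gaussianReal c ⟨σ ^ 2, sq_nonneg σ⟩) = c + σ * stdGaussianQuantile β := by
  have hv : (⟨σ ^ 2, sq_nonneg σ⟩ : NNReal) ≠ 0 := by
    intro h
    have : (σ : ℝ) ^ 2 = 0 := congrArg NNReal.toReal h
    nlinarith
  have h1 : ((1 : NNReal)) ≠ 0 := one_ne_zero
  have hstd := VaR_spec (gaussianReal 0 1) (gaussian_cdf_continuous 0 h1)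
    (gaussian_cdf_strictMono 0 h1) hβ
  have hpre : ∀ t : ℝ, ((gaussianReal c ⟨σ ^ 2, sq_nonneg σ⟩) (Set.Iic t)).toReal
      = ((gaussianReal 0 1) (Set.Iic ((t - c) / σ))).toReal := by
    intro t
    rw [gaussianReal_eq_map c σ hσ, Measure.map_apply (by fun_prop) measurableSet_Iic]
    have hset : (fun x : ℝ => σ * x + c) ⁻¹' Set.Iic t = Set.Iic ((t - c) / σ) := by
      ext x
      simp only [Set.mem_preimage, Set.mem_Iic]
      rw [le_div_iff₀ hσ]
      constructor <;> intro h <;> nlinarith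
    rw [hset]
  refine VaR_eq_of_cdf_eq _ (gaussian_cdf_continuous c hv) (gaussian_cdf_strictMono c hv) hβ ?_
  rw [hpre]
  have heq : (c + σ * stdGaussianQuantile β - c) / σ = stdGaussianQuantile β := by
    field_simp
    ring
  rw [heq]
  exact hstd.1

/-- If `X` has continuous strictly increasing CDF, `Y ~ N(c, σ²)`, and the total variation
distance between the laws of `X` and `Y` is at most `ε`, then
`VaR^{α−ε}(Y) ≤ VaR^α(X) ≤ VaR^{α+ε}(Y)` and
`|VaR^α(X) − VaR^α(Y)| ≤ σ · max{Φ⁻¹(α) − Φ⁻¹(α−ε), Φ⁻¹(α+ε) − Φ⁻¹(α)}`. -/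
theorem VaR_close_of_tvDist_le_gaussian
    (μX : Measure ℝ) [IsProbabilityMeasure μX]
    (hcdf_cont : Continuous fun t => (μX (Set.Iic t)).toReal)
    (hcdf_mono : StrictMono fun t => (μX (Set.Iic t)).toReal)
    (c σ : ℝ) (hσ : 0 < σ)
    (α ε : ℝ) (hα : α ∈ Set.Ioo (0 : ℝ) 1)
    (hε : ε ∈ Set.Ioo (0 : ℝ) (min α (1 - α)))
    (htv : tvDist μX (gaussianReal c ⟨σ ^ 2, sq_nonneg σ⟩) ≤ ε) :
    (VaR (α - ε) (gaussianReal c ⟨σ ^ 2, sq_nonneg σ⟩) ≤ VaR α μX ∧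
      VaR α μX ≤ VaR (α + ε) (gaussianReal c ⟨σ ^ 2, sq_nonneg σ⟩)) ∧
    |VaR α μX - VaR α (gaussianReal c ⟨σ ^ 2, sq_nonneg σ⟩)| ≤
      σ * max (stdGaussianQuantile α - stdGaussianQuantile (α - ε))
        (stdGaussianQuantile (α + ε) - stdGaussianQuantile α) := by
  have hv : (⟨σ ^ 2, sq_nonneg σ⟩ : NNReal) ≠ 0 := by
    intro h
    have : (σ : ℝ) ^ 2 = 0 := congrArg NNReal.toReal h
    nlinarith
  have hGc := gaussian_cdf_continuous c hv
  have hGm := gaussian_cdf_strictMono c hv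
  obtain ⟨hε0, hεm⟩ := hε
  have hεα : ε < α := lt_of_lt_of_le hεm (min_le_left _ _)
  have hεα' : ε < 1 - α := lt_of_lt_of_le hεm (min_le_right _ _)
  have hβ1 : α - ε ∈ Set.Ioo (0:ℝ) 1 := ⟨by linarith, by linarith [hα.2]⟩
  have hβ2 : α + ε ∈ Set.Ioo (0:ℝ) 1 := ⟨by linarith [hα.1], by linarith⟩
  have htv' : ∀ t : ℝ,
      |(μX (Set.Iic t)).toReal
        - ((gaussianReal c ⟨σ ^ 2, sq_nonneg σ⟩) (Set.Iic t)).toReal| ≤ ε := by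
    intro t
    refine le_trans ?_ htv
    have hb : BddAbove (Set.range fun A : {A : Set ℝ // MeasurableSet A} =>
        |(μX A.1).toReal - ((gaussianReal c ⟨σ ^ 2, sq_nonneg σ⟩) A.1).toReal|) := ?_
    · exact le_ciSup hb (⟨Set.Iic t, measurableSet_Iic⟩ : {A : Set ℝ // MeasurableSet A})
    refine ⟨1, ?_⟩
    rintro x ⟨A, rfl⟩
    have h1 : (μX A.1).toReal ≤ 1 := by
      have := ENNReal.toReal_mono ENNReal.one_ne_top (prob_le_one (μ := μX) (s := A.1))
      simpa using this
    have h2 : ((gaussianReal c ⟨σ ^ 2, sq_nonneg σ⟩) A.1).toReal ≤ 1 := by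
      have := ENNReal.toReal_mono ENNReal.one_ne_top
        (prob_le_one (μ := gaussianReal c ⟨σ ^ 2, sq_nonneg σ⟩) (s := A.1))
      simpa using this
    have h3 : 0 ≤ (μX A.1).toReal := ENNReal.toReal_nonneg
    have h4 : 0 ≤ ((gaussianReal c ⟨σ ^ 2, sq_nonneg σ⟩) A.1).toReal := ENNReal.toReal_nonneg
    rw [abs_le]
    constructor <;> linarith
  have hX := VaR_spec μX hcdf_cont hcdf_mono hα
  have hY1 := VaR_spec _ hGc hGm hβ1
  have hY2 := VaR_spec _ hGc hGm hβ2
  have hlow : VaR (α - ε) (gaussianReal c ⟨σ ^ 2, sq_nonneg σ⟩) ≤ VaR α μX := by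
    refine (hY1.2 (VaR α μX)).mpr ?_
    have h1 := htv' (VaR α μX)
    rw [abs_le] at h1
    have h2 := hX.1
    linarith [h1.1, h1.2]
  have hhigh : VaR α μX ≤ VaR (α + ε) (gaussianReal c ⟨σ ^ 2, sq_nonneg σ⟩) := by
    refine (hX.2 _).mpr ?_
    have h1 := htv' (VaR (α + ε) (gaussianReal c ⟨σ ^ 2, sq_nonneg σ⟩))
    rw [abs_le] at h1
    have h2 := hY2.1
    linarith [h1.1, h1.2]
  refine ⟨⟨hlow, hhigh⟩, ?_⟩
  have e1 := VaR_gaussian c σ hσ hβ1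
  have e2 := VaR_gaussian c σ hσ hα
  have e3 := VaR_gaussian c σ hσ hβ2
  have hM1 : σ * (stdGaussianQuantile α - stdGaussianQuantile (α - ε)) ≤
      σ * max (stdGaussianQuantile α - stdGaussianQuantile (α - ε))
        (stdGaussianQuantile (α + ε) - stdGaussianQuantile α) :=
    mul_le_mul_of_nonneg_left (le_max_left _ _) hσ.le
  have hM2 : σ * (stdGaussianQuantile (α + ε) - stdGaussianQuantile α) ≤
      σ * max (stdGaussianQuantile α - stdGaussianQuantile (α - ε))
        (stdGaussianQuantile (α + ε) - stdGaussianQuantile α) :=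
    mul_le_mul_of_nonneg_left (le_max_right _ _) hσ.le
  rw [abs_le]
  rw [e1] at hlow
  rw [e3] at hhigh
  rw [e2]
  constructor <;> nlinarith
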